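/- Let p be a prime. Then (1 - x) · exp(∑_{n ≥ 1} (pn)_p x^n / n) = P_p(x)^{p-1} as formal power series over ℚ, where P_p(x) = ∏_{n ≥ 0} (1 - x^{p^n})^{-1} and (pn)_p denotes the p-part of pn. -/

import Mathlib

open PowerSeries

/-- The formal exponential `exp f = ∑ₖ f^k / k!` of a power series `f` (with zero constant term). -/
noncomputable def expPS (f : PowerSeries ℚ) : PowerSeries ℚ :=
  PowerSeries.mk fun n =>
    ∑ k ∈ Finset.range (n + 1), (PowerSeries.coeff n (f ^ k)) / (Nat.factorial k)

/-- The series `∑_{n ≥ 1} a n * x^n / n`. -/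
noncomputable def serA (a : ℕ → ℚ) : PowerSeries ℚ :=
  PowerSeries.mk fun n => if n = 0 then 0 else a n / n

/-- The `(x)`-adic limit of the partial products `∏_{n ≤ N} f n`: this is the infinite product `∏_{n ≥ 0} f n` whenever the factor `f n` is `≡ 1 mod x^n`. -/
noncomputable def prodPS (f : ℕ → PowerSeries ℚ) : PowerSeries ℚ :=
  PowerSeries.mk fun N => PowerSeries.coeff N (∏ n ∈ Finset.range (N + 1), f n)

/-- The generating function `P_p(x) = ∏_{n ≥ 0} (1 - x^(p^n))⁻¹` for partitions into powers of `p`. -/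
noncomputable def partitionProd (p : ℕ) : PowerSeries ℚ :=
  prodPS fun n => ((1 : PowerSeries ℚ) - PowerSeries.X ^ (p ^ n))⁻¹

section Aux

noncomputable def gfac (k : ℕ) : PowerSeries ℚ := ((1 : PowerSeries ℚ) - X ^ k)⁻¹

lemma const_one_sub_X_pow (k : ℕ) (hk : 0 < k) :
    constantCoeff ((1 : PowerSeries ℚ) - X ^ k) = 1 := by
  simp [map_sub, map_pow, hk.ne']

lemma gfac_mul (k : ℕ) (hk : 0 < k) :
    ((1 : PowerSeries ℚ) - X ^ k) * gfac k = 1 := by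
  refine PowerSeries.mul_inv_cancel _ ?_
  rw [const_one_sub_X_pow k hk]; norm_num

/-- `h k = X^(k-1)/(1-X^k)` explicitly. -/
noncomputable def geo (k : ℕ) : PowerSeries ℚ :=
  PowerSeries.mk fun m => if k ∣ m + 1 then 1 else 0

lemma dvd_shift {k n : ℕ} (h : k ≤ n) : k ∣ n + 1 ↔ k ∣ n - k + 1 := by
  constructor <;> intro hd
  · have h2 := Nat.dvd_sub hd (dvd_refl k)
    rwa [show n + 1 - k = n - k + 1 by omega] at h2
  · have h2 := Nat.dvd_add hd (dvd_refl k)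
    rwa [show n - k + 1 + k = n + 1 by omega] at h2

lemma one_sub_mul_geo (k : ℕ) (hk : 0 < k) :
    ((1 : PowerSeries ℚ) - X ^ k) * geo k = X ^ (k - 1) := by
  ext n
  rw [sub_mul, one_mul, map_sub, coeff_X_pow, coeff_X_pow_mul']
  simp only [geo, coeff_mk]
  rcases lt_or_ge n k with h | h
  · rw [if_neg (by omega : ¬ k ≤ n), sub_zero]
    by_cases hd : k ∣ n + 1
    · have h1 : k ≤ n + 1 := Nat.le_of_dvd (Nat.succ_pos n) hd
      have h2 : k = n + 1 := by omega
      rw [if_pos hd, if_pos (by omega : n = k - 1)]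
    · rw [if_neg hd, if_neg]
      intro hnk
      exact hd (by rw [show n + 1 = k by omega])
  · rw [if_pos h, if_neg (by omega : ¬ n = k - 1)]
    by_cases hd : k ∣ n + 1
    · rw [if_pos hd, if_pos ((dvd_shift h).mp hd), sub_self]
    · rw [if_neg hd, if_neg (fun hh => hd ((dvd_shift h).mpr hh)), sub_self]

lemma X_pow_mul_gfac (k : ℕ) (hk : 0 < k) :
    X ^ (k - 1) * gfac k = geo k := by
  have hne : ((1 : PowerSeries ℚ) - X ^ k) ≠ 0 := by
    intro h
    have h2 := const_one_sub_X_pow k hk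
    rw [h] at h2; simp at h2
  apply mul_left_cancel₀ hne
  calc ((1 : PowerSeries ℚ) - X ^ k) * (X ^ (k - 1) * gfac k)
      = X ^ (k - 1) * (((1 : PowerSeries ℚ) - X ^ k) * gfac k) := by ring
    _ = X ^ (k - 1) := by rw [gfac_mul k hk, mul_one]
    _ = ((1 : PowerSeries ℚ) - X ^ k) * geo k := (one_sub_mul_geo k hk).symm

lemma deriv_X_pow (k : ℕ) :
    d⁄dX ℚ ((X : PowerSeries ℚ) ^ k) = (k : PowerSeries ℚ) * X ^ (k - 1) := by
  rw [Derivation.leibniz_pow, derivative_X]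
  simp [nsmul_eq_mul, smul_eq_mul]

lemma deriv_gfac (k : ℕ) (hk : 0 < k) :
    d⁄dX ℚ (gfac k) = (k : PowerSeries ℚ) * X ^ (k - 1) * gfac k ^ 2 := by
  unfold gfac
  rw [derivative_inv', map_sub, deriv_X_pow]
  have : d⁄dX ℚ (1 : PowerSeries ℚ) = 0 := by
    simpa using (d⁄dX ℚ).map_one_eq_zero
  rw [this]
  ring

noncomputable def Qp (p M : ℕ) : PowerSeries ℚ := ∏ n ∈ Finset.range M, gfac (p ^ n)

noncomputable def sM (p M : ℕ) : PowerSeries ℚ :=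
  ∑ n ∈ Finset.range M, ((p : PowerSeries ℚ) ^ n * X ^ (p ^ n - 1)) * gfac (p ^ n)

lemma deriv_Qp (p : ℕ) (hp : 0 < p) (M : ℕ) :
    d⁄dX ℚ (Qp p M) = sM p M * Qp p M := by
  induction M with
  | zero =>
    simp only [Qp, sM, Finset.range_zero, Finset.prod_empty, Finset.sum_empty, zero_mul]
    simpa using (d⁄dX ℚ).map_one_eq_zero
  | succ M ih =>
    rw [Qp, Finset.prod_range_succ, ← Qp]
    rw [Derivation.leibniz, smul_eq_mul, smul_eq_mul, ih, deriv_gfac _ (pow_pos hp M)]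
    simp only [sM, Finset.sum_range_succ]
    push_cast
    ring

lemma gfac_eq (k : ℕ) (hk : 0 < k) : gfac k = 1 + X ^ k * gfac k := by
  have h := gfac_mul k hk
  rw [sub_mul, one_mul] at h
  linear_combination h

lemma coeff_Qp_stable (p : ℕ) (hp : 2 ≤ p) (j M M' : ℕ) (h : j + 1 ≤ M) (h' : M ≤ M') :
    (coeff j) (Qp p M') = (coeff j) (Qp p M) := by
  induction M' with
  | zero => obtain rfl : M = 0 := Nat.le_zero.mp h'; rfl
  | succ K ih =>
    rcases Nat.lt_or_ge M (K+1) with hlt | hge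
    · have hK : M ≤ K := by omega
      rw [← ih hK]
      rw [Qp, Finset.prod_range_succ, ← Qp, gfac_eq _ (pow_pos (by omega) K)]
      rw [mul_add, mul_one, map_add, ← mul_assoc, mul_comm (Qp p K) ((X : PowerSeries ℚ) ^ p ^ K), mul_assoc, coeff_X_pow_mul']
      have hj : j < p ^ K := by
        calc j < 2 ^ j := Nat.lt_two_pow_self
        _ ≤ 2 ^ K := Nat.pow_le_pow_right (by omega) (by omega)
        _ ≤ p ^ K := Nat.pow_le_pow_left hp K
      rw [if_neg (by omega), add_zero]
    · have hMK : M = K + 1 := by omega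
      rw [hMK]

lemma coeff_P (p : ℕ) (hp : 2 ≤ p) (j M : ℕ) (h : j + 1 ≤ M) :
    (coeff j) (partitionProd p) = (coeff j) (Qp p M) := by
  rw [partitionProd, prodPS, coeff_mk]
  have : (∏ n ∈ Finset.range (j + 1), ((1 : PowerSeries ℚ) - X ^ p ^ n)⁻¹) = Qp p (j+1) := by
    rfl
  rw [this, coeff_Qp_stable p hp j (j+1) M (le_refl _) h]

noncomputable def tser (p : ℕ) : PowerSeries ℚ :=
  PowerSeries.mk fun j => (p : ℚ) ^ (1 + padicValNat p (j + 1)) - 1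

lemma coeff_sM (p : ℕ) (hp : p.Prime) (M j : ℕ) (hj : j + 1 < p ^ M) :
    ((p : ℚ) - 1) * (coeff j) (sM p M) = (coeff j) (tser p) := by
  haveI : Fact p.Prime := ⟨hp⟩
  have hp2 : 2 ≤ p := hp.two_le
  set ν := padicValNat p (j + 1) with hν
  have hcoeff : (coeff j) (sM p M) =
      ∑ n ∈ Finset.range M, (if p ^ n ∣ j + 1 then (p : ℚ) ^ n else 0) := by
    rw [sM, map_sum]
    refine Finset.sum_congr rfl fun n _ => ?_
    rw [mul_assoc, X_pow_mul_gfac _ (pow_pos (by omega) n)]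
    have hc : ((p : PowerSeries ℚ) ^ n) = C ((p : ℚ) ^ n) := by
      rw [map_pow, map_natCast]
    rw [hc, coeff_C_mul, geo, coeff_mk]
    split <;> simp
  rw [hcoeff]
  have hνM : ν < M := by
    have h1 : p ^ ν ∣ j + 1 := pow_padicValNat_dvd
    have h2 : p ^ ν ≤ j + 1 := Nat.le_of_dvd (by omega) h1
    by_contra hc
    have : p ^ M ≤ p ^ ν := Nat.pow_le_pow_right (by omega) (by omega)
    omega
  have hdvd : ∀ n : ℕ, (p ^ n ∣ j + 1 ↔ n ≤ ν) := by
    intro n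
    rw [padicValNat_dvd_iff_le (by omega : j + 1 ≠ 0)]
  have hsum : ∑ n ∈ Finset.range M, (if p ^ n ∣ j + 1 then (p : ℚ) ^ n else 0)
      = ∑ n ∈ Finset.range (ν + 1), (p : ℚ) ^ n := by
    rw [← Finset.sum_subset (Finset.range_subset_range.mpr (by omega : ν + 1 ≤ M))
      (fun x _ hx => by rw [if_neg]; rw [hdvd]; simp at hx; omega)]
    exact Finset.sum_congr rfl fun n hn => by
      rw [if_pos ((hdvd n).mpr (by simp at hn; omega))]
  rw [hsum, tser, coeff_mk, mul_comm, geom_sum_mul, add_comm 1 ν]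

lemma coeff_mul_congr {A A' B B' : PowerSeries ℚ} {N : ℕ}
    (hA : ∀ i ≤ N, (coeff i) A = (coeff i) A')
    (hB : ∀ i ≤ N, (coeff i) B = (coeff i) B') :
    (coeff N) (A * B) = (coeff N) (A' * B') := by
  rw [coeff_mul, coeff_mul]
  refine Finset.sum_congr rfl fun x hx => ?_
  rw [Finset.HasAntidiagonal.mem_antidiagonal] at hx
  rw [hA x.1 (by omega), hB x.2 (by omega)]

lemma key (p : ℕ) (hp : p.Prime) :
    tser p * partitionProd p = ((p : ℚ) - 1) • d⁄dX ℚ (partitionProd p) := by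
  have hp2 : 2 ≤ p := hp.two_le
  ext N
  set M := N + 2 with hM
  have hpow : N + 1 < p ^ M := by
    calc N + 1 < 2 ^ M := by
          calc N + 1 < 2 ^ (N + 1) := Nat.lt_two_pow_self
          _ ≤ 2 ^ M := Nat.pow_le_pow_right (by omega) (by omega)
    _ ≤ p ^ M := Nat.pow_le_pow_left hp2 M
  have step1 : (coeff N) (tser p * partitionProd p)
      = (coeff N) ((((p : ℚ) - 1) • sM p M) * Qp p M) := by
    refine coeff_mul_congr (fun i hi => ?_) (fun i hi => coeff_P p hp2 i M (by omega))
    rw [map_smul, smul_eq_mul, coeff_sM p hp M i (by omega)]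
  rw [step1, smul_mul_assoc, ← deriv_Qp p (by omega) M, map_smul, map_smul,
    smul_eq_mul, smul_eq_mul, coeff_derivative, coeff_derivative,
    coeff_P p hp2 (N + 1) M (by omega)]

lemma coeff_zero_expPS (f : PowerSeries ℚ) : (coeff 0) (expPS f) = 1 := by
  rw [expPS, coeff_mk]
  simp

lemma coeff_pow_eq_zero {f : PowerSeries ℚ} (hf : constantCoeff f = 0)
    {j k : ℕ} (h : j < k) : (coeff j) (f ^ k) = 0 := by
  have h1 : (X : PowerSeries ℚ) ∣ f := X_dvd_iff.mpr hf
  have h2 : (X : PowerSeries ℚ) ^ k ∣ f ^ k := pow_dvd_pow_of_dvd h1 k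
  exact X_pow_dvd_iff.mp h2 j h

lemma deriv_expPS {f : PowerSeries ℚ} (hf : constantCoeff f = 0) :
    d⁄dX ℚ (expPS f) = d⁄dX ℚ f * expPS f := by
  ext n
  have lhs : (coeff n) (d⁄dX ℚ (expPS f))
      = ∑ j ∈ Finset.range (n + 1), (coeff n) (d⁄dX ℚ f * f ^ j) / (Nat.factorial j) := by
    rw [coeff_derivative, expPS, coeff_mk, Finset.sum_mul]
    have term : ∀ k, (coeff (n+1)) (f ^ k) / (Nat.factorial k) * (n + 1)
        = (k : ℚ) * (coeff n) (f ^ (k - 1) * d⁄dX ℚ f) / (Nat.factorial k) := by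
      intro k
      have hd : (coeff n) (d⁄dX ℚ (f ^ k)) = (coeff (n+1)) (f ^ k) * (n + 1) :=
        coeff_derivative _ _
      rw [Derivation.leibniz_pow] at hd
      rw [div_mul_eq_mul_div, ← hd]
      simp only [map_nsmul, smul_eq_mul, nsmul_eq_mul]
      rw [show ((k : PowerSeries ℚ)) = C (k : ℚ) from (map_natCast C k).symm,
        coeff_C_mul]
    rw [Finset.sum_congr rfl fun k _ => term k]
    rw [Finset.sum_range_succ']
    simp only [Nat.cast_zero, zero_mul, zero_div, add_zero, Nat.cast_add, Nat.cast_one,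
      Nat.add_sub_cancel, Nat.factorial_succ]
    refine Finset.sum_congr rfl fun j _ => ?_
    rw [mul_comm (f ^ j) (d⁄dX ℚ f)]
    push_cast
    have hj0 : ((j : ℚ) + 1) ≠ 0 := by positivity
    have hjf : ((Nat.factorial j : ℚ)) ≠ 0 := by positivity
    field_simp
  rw [lhs, coeff_mul]
  refine Eq.symm ?_
  have hcE : ∀ j ≤ n, (coeff j) (expPS f)
      = ∑ k ∈ Finset.range (n + 1), (coeff j) (f ^ k) / (Nat.factorial k) := by
    intro j hj
    rw [expPS, coeff_mk]
    refine Finset.sum_subset (Finset.range_subset_range.mpr (by omega)) fun k _ hk => ?_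
    rw [coeff_pow_eq_zero hf (by simp at hk ⊢; omega)]
    simp
  calc ∑ x ∈ Finset.HasAntidiagonal.antidiagonal n, (coeff x.1) (d⁄dX ℚ f) * (coeff x.2) (expPS f)
      = ∑ x ∈ Finset.HasAntidiagonal.antidiagonal n, ∑ k ∈ Finset.range (n + 1),
          (coeff x.1) (d⁄dX ℚ f) * (coeff x.2) (f ^ k) / (Nat.factorial k) := by
        refine Finset.sum_congr rfl fun x hx => ?_
        rw [Finset.HasAntidiagonal.mem_antidiagonal] at hx
        rw [hcE x.2 (by omega), Finset.mul_sum]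
        exact Finset.sum_congr rfl fun k _ => by ring
    _ = ∑ k ∈ Finset.range (n + 1), ∑ x ∈ Finset.HasAntidiagonal.antidiagonal n,
          (coeff x.1) (d⁄dX ℚ f) * (coeff x.2) (f ^ k) / (Nat.factorial k) :=
        Finset.sum_comm
    _ = ∑ j ∈ Finset.range (n + 1), (coeff n) (d⁄dX ℚ f * f ^ j) / (Nat.factorial j) := by
        refine Finset.sum_congr rfl fun k _ => ?_
        rw [coeff_mul, Finset.sum_div]

lemma eq_of_logDeriv_eq {F G : PowerSeries ℚ} (hF : (coeff 0) F = 1) (hG : (coeff 0) G = 1)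
    (h : d⁄dX ℚ F * G = d⁄dX ℚ G * F) : F = G := by
  ext n
  induction n using Nat.strong_induction_on with
  | _ n ih =>
    match n with
    | 0 => rw [hF, hG]
    | m + 1 =>
      have h0 := congrArg (coeff m) h
      rw [coeff_mul, coeff_mul, Finset.Nat.sum_antidiagonal_eq_sum_range_succ_mk,
        Finset.Nat.sum_antidiagonal_eq_sum_range_succ_mk, Finset.sum_range_succ,
        Finset.sum_range_succ] at h0
      have hsame : ∑ k ∈ Finset.range m, (coeff k) (d⁄dX ℚ F) * (coeff (m - k)) G
          = ∑ k ∈ Finset.range m, (coeff k) (d⁄dX ℚ G) * (coeff (m - k)) F := by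
        refine Finset.sum_congr rfl fun k hk => ?_
        rw [Finset.mem_range] at hk
        rw [coeff_derivative, coeff_derivative, ih (k + 1) (by omega), ih (m - k) (by omega)]
      rw [hsame] at h0
      have h1 := add_left_cancel h0
      rw [Nat.sub_self, hF, hG, mul_one, mul_one, coeff_derivative, coeff_derivative] at h1
      have hm : ((m : ℚ) + 1) ≠ 0 := by positivity
      exact mul_right_cancel₀ hm h1

lemma const_serA (a : ℕ → ℚ) : constantCoeff (serA a) = 0 := by
  rw [← coeff_zero_eq_constantCoeff_apply, serA, coeff_mk, if_pos rfl]

lemma one_sub_X_mul_ones : ((1 : PowerSeries ℚ) - X) * PowerSeries.mk (fun _ => (1:ℚ)) = 1 := by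
  ext n
  cases n with
  | zero =>
    rw [coeff_zero_eq_constantCoeff_apply, coeff_zero_eq_constantCoeff_apply, map_mul, map_sub]
    simp
  | succ m =>
    rw [sub_mul, one_mul, map_sub, coeff_succ_X_mul, coeff_mk, coeff_mk, sub_self,
      coeff_one, if_neg (by omega)]

lemma deriv_serA (p : ℕ) (hp : p.Prime) :
    d⁄dX ℚ (serA fun n => (p : ℚ) ^ (1 + padicValNat p n))
      = tser p + PowerSeries.mk (fun _ => (1:ℚ)) := by
  ext n
  rw [coeff_derivative, serA, coeff_mk, if_neg (by omega), map_add, tser, coeff_mk, coeff_mk]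
  push_cast
  have : ((n : ℚ) + 1) ≠ 0 := by positivity
  field_simp
  ring

end Aux

/-- `(1 - x) exp (∑_{n ≥ 1} (p n)_p x^n / n) = P_p(x)^(p-1)`, where
`(p n)_p = p^(1 + ν_p n)` is the p-part of `p n`. -/
theorem stmt_14 (p : ℕ) (hp : p.Prime) :
    ((1 : PowerSeries ℚ) - PowerSeries.X) *
        expPS (serA fun n => (p : ℚ) ^ (1 + padicValNat p n)) =
      (partitionProd p) ^ (p - 1) := by
  have hp2 : 2 ≤ p := hp.two_le
  set f := serA fun n => (p : ℚ) ^ (1 + padicValNat p n) with hfdef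
  set E := expPS f with hE
  set P := partitionProd p with hP
  have hconstP : constantCoeff P = 1 := by
    have h1 : constantCoeff (gfac 1) = 1 := by
      rw [gfac, PowerSeries.constantCoeff_inv, const_one_sub_X_pow 1 (by omega)]
      norm_num
    rw [← coeff_zero_eq_constantCoeff_apply, hP, coeff_P p hp2 0 1 (by omega),
      Qp, Finset.range_one, Finset.prod_singleton, pow_zero,
      coeff_zero_eq_constantCoeff_apply, h1]
  have hF0 : (coeff 0) (((1 : PowerSeries ℚ) - X) * E) = 1 := by
    rw [coeff_zero_eq_constantCoeff_apply, map_mul, map_sub, map_one, constantCoeff_X, sub_zero,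
      one_mul, ← coeff_zero_eq_constantCoeff_apply, hE, coeff_zero_expPS]
  have hG0 : (coeff 0) (P ^ (p - 1)) = 1 := by
    rw [coeff_zero_eq_constantCoeff_apply, map_pow, hconstP, one_pow]
  refine eq_of_logDeriv_eq hF0 hG0 ?_
  -- derivative of F
  have hdf : d⁄dX ℚ f = tser p + PowerSeries.mk (fun _ => (1:ℚ)) := deriv_serA p hp
  have hdE : d⁄dX ℚ E = d⁄dX ℚ f * E := deriv_expPS (const_serA _)
  have hdF : d⁄dX ℚ (((1 : PowerSeries ℚ) - X) * E)
      = (((1 : PowerSeries ℚ) - X) * tser p) * E := by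
    rw [Derivation.leibniz, smul_eq_mul, smul_eq_mul, hdE, hdf]
    rw [map_sub, derivative_X]
    have h1 : d⁄dX ℚ (1 : PowerSeries ℚ) = 0 := by simpa using (d⁄dX ℚ).map_one_eq_zero
    rw [h1]
    have h2 := one_sub_X_mul_ones
    linear_combination (E : PowerSeries ℚ) * h2
  have hdG : d⁄dX ℚ (P ^ (p - 1)) = (p - 1) • (P ^ (p - 2) * d⁄dX ℚ P) := by
    rw [Derivation.leibniz_pow, smul_eq_mul, show p - 1 - 1 = p - 2 from rfl]
  rw [hdF, hdG]
  have hcast : (((p - 1 : ℕ)) : ℚ) = (p : ℚ) - 1 := by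
    push_cast [Nat.cast_sub (by omega : 1 ≤ p)]
    ring
  have hsmul : ((p - 1 : ℕ)) • (P ^ (p - 2) * d⁄dX ℚ P)
      = C ((p : ℚ) - 1) * (P ^ (p - 2) * d⁄dX ℚ P) := by
    rw [← Nat.cast_smul_eq_nsmul ℚ, hcast, smul_eq_C_mul]
  have hkey : tser p * P = C ((p : ℚ) - 1) * d⁄dX ℚ P := by
    rw [hP, key p hp, smul_eq_C_mul]
  have hpow1 : P ^ (p - 1) = P ^ (p - 2) * P := by
    rw [← pow_succ, show p - 2 + 1 = p - 1 by omega]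
  rw [hsmul, hpow1]
  linear_combination (((1 : PowerSeries ℚ) - X) * E * P ^ (p - 2)) * hkey
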